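/- Consider the Ranking algorithm for online bipartite matching on a graph H = (U ∪ V, E) with arrival order π on U and ranking σ on V: each arriving keyword u is matched to its unmatched neighbor v minimizing σ(v), if any exists. Then the matching produced equals the matching produced by the dual process in which vertices of V arrive in order σ and each arriving v is matched to its unmatched neighbor u minimizing π(u). -/

import Mathlib

/-- The set of right-hand vertices matched by the greedy online matching process
after the first `t` arrivals: left vertices `Fin m` arrive in index order, and each
arriving vertex is matched to its currently unmatched neighbor minimizing `rk`. -/
noncomputable def greedyMatchedUpTo (m : ℕ) {R : Type*} [Fintype R] [DecidableEq R]
    (A : Fin m → R → Prop) [∀ t v, Decidable (A t v)] (rk : R → ℕ) : ℕ → Finset R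
  | 0 => ∅
  | t + 1 =>
    let M := greedyMatchedUpTo m A rk t
    if h : t < m then
      let avail := Finset.univ.filter fun v => A ⟨t, h⟩ v ∧ v ∉ M
      if hne : avail.Nonempty then
        insert (Function.argminOn rk ↑avail (Finset.coe_nonempty.mpr hne)) M
      else M
    else M

/-- The partner assigned by the greedy online matching (Ranking) to the arriving
vertex `u`, if any. -/
noncomputable def greedyAssign (m : ℕ) {R : Type*} [Fintype R] [DecidableEq R]
    (A : Fin m → R → Prop) [∀ t v, Decidable (A t v)] (rk : R → ℕ) (u : Fin m) :
    Option R :=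
  let M := greedyMatchedUpTo m A rk u.val
  let avail := Finset.univ.filter fun v => A u v ∧ v ∉ M
  if hne : avail.Nonempty then
    some (Function.argminOn rk ↑avail (Finset.coe_nonempty.mpr hne))
  else none

section aux

variable {m : ℕ} {R : Type*} [Fintype R] [DecidableEq R]
  (A : Fin m → R → Prop) [∀ t v, Decidable (A t v)] (rk : R → ℕ)

lemma greedy_step_subset (t : ℕ) :
    greedyMatchedUpTo m A rk t ⊆ greedyMatchedUpTo m A rk (t + 1) := by
  rw [greedyMatchedUpTo]
  dsimp only
  split_ifs with h hne
  · exact Finset.subset_insert _ _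
  · exact subset_rfl
  · exact subset_rfl

lemma greedy_mono {s t : ℕ} (hst : s ≤ t) :
    greedyMatchedUpTo m A rk s ⊆ greedyMatchedUpTo m A rk t := by
  induction t with
  | zero => simpa [Nat.le_zero.mp hst] using subset_rfl
  | succ t ih =>
    rcases Nat.lt_or_ge s (t+1) with h | h
    · exact (ih (Nat.lt_succ_iff.mp h)).trans (greedy_step_subset A rk t)
    · have : s = t + 1 := le_antisymm hst h
      simp [this]

lemma assign_some_iff (u : Fin m) (v : R) :
    greedyAssign m A rk u = some v ↔
      ∃ hne : (Finset.univ.filter fun w =>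
          A u w ∧ w ∉ greedyMatchedUpTo m A rk u.val).Nonempty,
        v = Function.argminOn rk _ (Finset.coe_nonempty.mpr hne) := by
  unfold greedyAssign
  dsimp only
  split_ifs with h
  · rw [Option.some_inj]
    exact ⟨fun hv => ⟨h, hv.symm⟩, fun ⟨_, hv⟩ => hv.symm⟩
  · simp [h]

lemma assign_mem {u : Fin m} {v : R} (hu : greedyAssign m A rk u = some v) :
    A u v ∧ v ∉ greedyMatchedUpTo m A rk u.val := by
  rw [assign_some_iff] at hu
  obtain ⟨hne, rfl⟩ := hu
  have := Function.argminOn_mem rk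
    (↑(Finset.univ.filter fun w => A u w ∧ w ∉ greedyMatchedUpTo m A rk u.val))
    (Finset.coe_nonempty.mpr hne)
  rw [Finset.mem_coe, Finset.mem_filter] at this
  exact this.2

lemma assign_le {u : Fin m} {v w : R} (hu : greedyAssign m A rk u = some v)
    (hw : A u w) (hwm : w ∉ greedyMatchedUpTo m A rk u.val) : rk v ≤ rk w := by
  rw [assign_some_iff] at hu
  obtain ⟨hne, rfl⟩ := hu
  exact Function.argminOn_le rk _ (by simp [hw, hwm])

lemma assign_of_avail {u : Fin m} {v : R} (hv : A u v)
    (hvm : v ∉ greedyMatchedUpTo m A rk u.val) :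
    ∃ v', greedyAssign m A rk u = some v' ∧ rk v' ≤ rk v := by
  have hne : (Finset.univ.filter fun w =>
      A u w ∧ w ∉ greedyMatchedUpTo m A rk u.val).Nonempty := ⟨v, by simp [hv, hvm]⟩
  refine ⟨_, (assign_some_iff A rk u _).mpr ⟨hne, rfl⟩, ?_⟩
  exact Function.argminOn_le rk _ (by simp [hv, hvm])

lemma mem_matched_iff (t : ℕ) (v : R) :
    v ∈ greedyMatchedUpTo m A rk t ↔
      ∃ u : Fin m, u.val < t ∧ greedyAssign m A rk u = some v := by
  induction t with
  | zero => simp [greedyMatchedUpTo]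
  | succ t ih =>
    rw [greedyMatchedUpTo]
    dsimp only
    split_ifs with h hne
    · constructor
      · intro hv
        rcases Finset.mem_insert.mp hv with hv | hv
        · refine ⟨⟨t, h⟩, Nat.lt_succ_self t, ?_⟩
          exact (assign_some_iff A rk _ _).mpr ⟨hne, hv.symm ▸ rfl⟩
        · obtain ⟨u, hu, hau⟩ := ih.mp hv
          exact ⟨u, hu.trans (Nat.lt_succ_self t), hau⟩
      · rintro ⟨u, hu, hau⟩
        rcases Nat.lt_succ_iff_lt_or_eq.mp hu with hu' | hu'
        · exact Finset.mem_insert_of_mem (ih.mpr ⟨u, hu', hau⟩)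
        · have : u = ⟨t, h⟩ := Fin.ext hu'
          subst this
          rw [assign_some_iff] at hau
          obtain ⟨_, rfl⟩ := hau
          exact Finset.mem_insert_self _ _
    · constructor
      · intro hv
        obtain ⟨u, hu, hau⟩ := ih.mp hv
        exact ⟨u, hu.trans (Nat.lt_succ_self t), hau⟩
      · rintro ⟨u, hu, hau⟩
        rcases Nat.lt_succ_iff_lt_or_eq.mp hu with hu' | hu'
        · exact ih.mpr ⟨u, hu', hau⟩
        · have : u = ⟨t, h⟩ := Fin.ext hu'
          subst this
          rw [assign_some_iff] at hau
          obtain ⟨hne', _⟩ := hau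
          exact absurd hne' hne
    · constructor
      · intro hv
        obtain ⟨u, hu, hau⟩ := ih.mp hv
        exact ⟨u, hu.trans (Nat.lt_succ_self t), hau⟩
      · rintro ⟨u, hu, hau⟩
        refine ih.mpr ⟨u, ?_, hau⟩
        rcases Nat.lt_succ_iff_lt_or_eq.mp hu with hu' | hu'
        · exact hu'
        · exact absurd (hu' ▸ u.isLt) h

lemma assign_inj {u u' : Fin m} {v : R} (hu : greedyAssign m A rk u = some v)
    (hu' : greedyAssign m A rk u' = some v) : u = u' := by
  have key : ∀ {a b : Fin m}, greedyAssign m A rk a = some v →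
      greedyAssign m A rk b = some v → a.val < b.val → False := by
    intro a b ha hb hlt
    have h1 : v ∈ greedyMatchedUpTo m A rk b.val :=
      greedy_mono A rk hlt ((mem_matched_iff A rk (a.val + 1) v).mpr
        ⟨a, Nat.lt_succ_self _, ha⟩)
    exact (assign_mem A rk hb).2 h1
  by_contra hne
  have hv : u.val ≠ u'.val := fun h => hne (Fin.ext h)
  rcases lt_or_gt_of_ne hv with hlt | hlt
  · exact absurd (key hu hu' hlt) not_false
  · exact absurd (key hu' hu hlt) not_false

lemma assign_stable {u : Fin m} {v : R} (hv : A u v) :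
    (∃ v', greedyAssign m A rk u = some v' ∧ rk v' ≤ rk v) ∨
      (∃ u' : Fin m, u'.val < u.val ∧ greedyAssign m A rk u' = some v) := by
  by_cases hvm : v ∈ greedyMatchedUpTo m A rk u.val
  · exact Or.inr ((mem_matched_iff A rk u.val v).mp hvm)
  · exact Or.inl (assign_of_avail A rk hv hvm)

end aux

/-- Ranking on `H` (keywords `Fin m` arriving in index order, bidders `V`
ranked by `σ`) produces exactly the same matching as the dual process in which the
bidders arrive in the order given by `σ` and each arriving bidder is matched to its
unmatched neighboring keyword minimizing the arrival order `π` (here the index order). -/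
theorem stmt5 (m nV : ℕ) (A : Fin m → Fin nV → Prop) [∀ t v, Decidable (A t v)]
    (σ : Fin nV ≃ Fin nV) :
    ∀ (u : Fin m) (v : Fin nV),
      greedyAssign m A (fun v => (σ v : ℕ)) u = some v ↔
      greedyAssign nV (fun i u => A u (σ.symm i)) (fun u : Fin m => (u : ℕ)) (σ v)
        = some u := by
  set g1 : Fin m → Option (Fin nV) := greedyAssign m A (fun v => (σ v : ℕ)) with hg1
  set g2 : Fin nV → Option (Fin m) :=
    greedyAssign nV (fun i u => A u (σ.symm i)) (fun u : Fin m => (u : ℕ)) with hg2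
  have key : ∀ n (u : Fin m) (v : Fin nV), u.val + (σ v).val = n →
      (g1 u = some v ↔ g2 (σ v) = some u) := by
    intro n
    induction n using Nat.strong_induction_on with
    | _ n ih =>
    intro u v hn
    constructor
    · intro h1
      have hedge : A u v := (assign_mem _ _ h1).1
      have hB : A u (σ.symm (σ v)) := by rwa [Equiv.symm_apply_apply]
      rcases assign_stable (fun i u => A u (σ.symm i)) (fun u : Fin m => (u : ℕ)) hB with
        ⟨u', hgu', hle⟩ | ⟨i', hi', hgi⟩
      · by_cases heq : u' = u
        · rwa [heq] at hgu'
        · have hlt : u'.val < u.val := lt_of_le_of_ne hle (fun h => heq (Fin.ext h))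
          have hedge' : A u' v := by
            have := (assign_mem _ _ hgu').1
            rwa [Equiv.symm_apply_apply] at this
          rcases assign_stable A (fun v => (σ v : ℕ)) hedge' with
            ⟨v'', hgv'', hle''⟩ | ⟨u'', hu'', hgu''⟩
          · by_cases hv : v'' = v
            · rw [hv] at hgv''
              exact absurd (assign_inj _ _ hgv'' h1) heq
            · have hltv : ((σ v'') : ℕ) < (σ v : ℕ) :=
                lt_of_le_of_ne hle'' (fun h => hv (σ.injective (Fin.ext h)))
              have hsum : u'.val + ((σ v'') : ℕ) < n := by omega
              have h2'' := (ih _ hsum u' v'' rfl).mp hgv''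
              have := assign_inj _ _ h2'' hgu'
              exact absurd (σ.injective this) hv
          · have := assign_inj _ _ hgu'' h1
            rw [this] at hu''
            exact absurd hu'' (by omega)
      · have hedge' : A u (σ.symm i') := (assign_mem _ _ hgi).1
        rcases assign_stable A (fun v => (σ v : ℕ)) hedge' with
          ⟨v'', hgv'', hle''⟩ | ⟨u'', hu'', hgu''⟩
        · have hv : v'' = v := Option.some.inj (hgv''.symm.trans h1)
          rw [hv] at hle''
          rw [Equiv.apply_symm_apply] at hle''
          exact absurd hle'' (by omega)
        · have hsum : u''.val + ((σ (σ.symm i')) : ℕ) < n := by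
            rw [Equiv.apply_symm_apply]; omega
          have h2'' := (ih _ hsum u'' (σ.symm i') rfl).mp hgu''
          rw [Equiv.apply_symm_apply] at h2''
          have : u'' = u := Option.some.inj (h2''.symm.trans hgi)
          rw [this] at hu''
          exact absurd hu'' (by omega)
    · intro h2
      have hedge : A u v := by
        have := (assign_mem _ _ h2).1
        rwa [Equiv.symm_apply_apply] at this
      rcases assign_stable A (fun v => (σ v : ℕ)) hedge with
        ⟨v', hgv', hle⟩ | ⟨u', hu', hgu'⟩
      · by_cases heq : v' = v
        · rwa [heq] at hgv'
        · have hlt : ((σ v') : ℕ) < (σ v : ℕ) :=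
            lt_of_le_of_ne hle (fun h => heq (σ.injective (Fin.ext h)))
          have hedge' : A u (σ.symm (σ v')) := by
            rw [Equiv.symm_apply_apply]
            exact (assign_mem _ _ hgv').1
          rcases assign_stable (fun i u => A u (σ.symm i)) (fun u : Fin m => (u : ℕ)) hedge'
            with ⟨u'', hgu'', hle''⟩ | ⟨i'', hi'', hgi''⟩
          · by_cases hequ : u'' = u
            · rw [hequ] at hgu''
              have := assign_inj _ _ hgu'' h2
              exact absurd (σ.injective this) heq
            · have hltu : u''.val < u.val := lt_of_le_of_ne hle'' (fun h => hequ (Fin.ext h))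
              have hsum : u''.val + ((σ v') : ℕ) < n := by omega
              have h1'' := (ih _ hsum u'' v' rfl).mpr hgu''
              exact absurd (assign_inj _ _ h1'' hgv') hequ
          · have := assign_inj _ _ hgi'' h2
            rw [this] at hi''
            exact absurd hi'' (by omega)
      · have hedge' : A u' (σ.symm (σ v)) := by
          rw [Equiv.symm_apply_apply]
          exact (assign_mem _ _ hgu').1
        rcases assign_stable (fun i u => A u (σ.symm i)) (fun u : Fin m => (u : ℕ)) hedge'
          with ⟨u'', hgu'', hle''⟩ | ⟨i', hi', hgi'⟩
        · have : u'' = u := Option.some.inj (hgu''.symm.trans h2)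
          rw [this] at hle''
          exact absurd hle'' (by omega)
        · have hsum : u'.val + ((σ (σ.symm i')) : ℕ) < n := by
            rw [Equiv.apply_symm_apply]; omega
          have h1'' := (ih _ hsum u' (σ.symm i') rfl).mpr
            (by rwa [Equiv.apply_symm_apply])
          have : σ.symm i' = v := Option.some.inj (h1''.symm.trans hgu')
          have : i' = σ v := by rw [← this, Equiv.apply_symm_apply]
          rw [this] at hi'
          exact absurd hi' (by omega)
  intro u v
  exact key (u.val + (σ v).val) u v rfl
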